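/- Let F : [0,∞)^m → ℝ be C¹ with F(0,...,0)=0 and each D_iF nonnegative and increasing in each variable. Let f_1,...,f_m : [a,b] → ℝ be absolutely continuous with f_i(a) = 0. Then ∫ₐᵇ ∑_{i=1}^m D_iF(|f_1(x)|,...,|f_m(x)|) |f_i'(x)| dx ≤ F(∫ₐᵇ |f_1'(x)| dx, ..., ∫ₐᵇ |f_m'(x)| dx). -/

import Mathlib

open scoped BigOperators
open MeasureTheory Set intervalIntegral

lemma opial_F_mono {m : ℕ} (F : (Fin m → ℝ) → ℝ) (D : Fin m → (Fin m → ℝ) → ℝ)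
    (hFderiv : ∀ x : Fin m → ℝ, (∀ i, 0 ≤ x i) →
      HasFDerivAt F (∑ i, D i x • (ContinuousLinearMap.proj i : (Fin m → ℝ) →L[ℝ] ℝ)) x)
    (hDcont : ∀ i, ContinuousOn (D i) {x : Fin m → ℝ | ∀ j, 0 ≤ x j})
    (hDnonneg : ∀ i (x : Fin m → ℝ), (∀ j, 0 ≤ x j) → 0 ≤ D i x)
    {x y : Fin m → ℝ} (hx : ∀ j, 0 ≤ x j) (hxy : ∀ j, x j ≤ y j) : F x ≤ F y := by
  set c : ℝ → Fin m → ℝ := fun t j => x j + t * (y j - x j) with hc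
  have hcc : Continuous c := by
    apply continuous_pi; intro j; fun_prop
  have hcpos : ∀ t ∈ Icc (0:ℝ) 1, ∀ j, 0 ≤ c t j := fun t ht j =>
    add_nonneg (hx j) (mul_nonneg ht.1 (sub_nonneg.2 (hxy j)))
  have hder : ∀ t ∈ uIcc (0:ℝ) 1,
      HasDerivAt (fun t => F (c t)) (∑ i, D i (c t) * (y i - x i)) t := by
    intro t ht
    rw [uIcc_of_le zero_le_one] at ht
    have h1 : HasDerivAt c (fun j => y j - x j) t := by
      rw [hasDerivAt_pi]
      intro j
      simpa [hc] using (hasDerivAt_mul_const (y j - x j)).const_add (x j)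
    have h2 := (hFderiv (c t) (hcpos t ht)).comp_hasDerivAt t h1
    exact h2.congr_deriv (by simp [ContinuousLinearMap.sum_apply, smul_eq_mul])
  have hint : IntervalIntegrable (fun t => ∑ i, D i (c t) * (y i - x i)) volume 0 1 := by
    apply ContinuousOn.intervalIntegrable
    apply continuousOn_finset_sum
    intro i _
    exact (((hDcont i).comp hcc.continuousOn fun t ht => hcpos t
      (by rwa [uIcc_of_le zero_le_one] at ht)).mul continuousOn_const)
  have key := integral_eq_sub_of_hasDerivAt hder hint
  have hnn : 0 ≤ ∫ t in (0:ℝ)..1, ∑ i, D i (c t) * (y i - x i) :=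
    intervalIntegral.integral_nonneg zero_le_one fun t ht =>
      Finset.sum_nonneg fun i _ =>
        mul_nonneg (hDnonneg i _ (hcpos t ht)) (sub_nonneg.2 (hxy i))
  have hc0 : c 0 = x := by funext j; simp [hc]
  have hc1 : c 1 = y := by funext j; simp [hc]
  rw [key, hc0, hc1] at hnn
  linarith

theorem opial_composition_several_functions (m : ℕ) (a b : ℝ) (hab : a < b)
    (F : (Fin m → ℝ) → ℝ) (D : Fin m → (Fin m → ℝ) → ℝ)
    (hF0 : F (fun _ => 0) = 0)
    (hFderiv : ∀ x : Fin m → ℝ, (∀ i, 0 ≤ x i) →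
      HasFDerivAt F (∑ i, D i x • (ContinuousLinearMap.proj i : (Fin m → ℝ) →L[ℝ] ℝ)) x)
    (hDcont : ∀ i, ContinuousOn (D i) {x : Fin m → ℝ | ∀ j, 0 ≤ x j})
    (hDnonneg : ∀ i (x : Fin m → ℝ), (∀ j, 0 ≤ x j) → 0 ≤ D i x)
    (hDmono : ∀ i (x y : Fin m → ℝ), (∀ j, 0 ≤ x j) → (∀ j, x j ≤ y j) → D i x ≤ D i y)
    (f f' : Fin m → ℝ → ℝ)
    (hf' : ∀ i, IntervalIntegrable (f' i) MeasureTheory.volume a b)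
    (hf : ∀ i, ∀ x ∈ Set.Icc a b, f i x = ∫ t in a..x, f' i t)
    (hfa : ∀ i, f i a = 0) :
    ∫ x in a..b, ∑ i, D i (fun j => |f j x|) * |f' i x| ≤
      F (fun i => ∫ x in a..b, |f' i x|) := by
  classical
  have hab' : a ≤ b := hab.le
  have habs : ∀ j, IntervalIntegrable (fun x => |f' j x|) volume a b := fun j => (hf' j).abs
  set p : Fin m → ℝ := fun j => ∫ x in a..b, |f' j x| with hp
  have hpnn : ∀ j, 0 ≤ p j := fun j =>
    intervalIntegral.integral_nonneg hab' fun x _ => abs_nonneg _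
  -- canonical primitives
  set fb : Fin m → ℝ → ℝ := fun j x => ∫ t in a..x, f' j t with hfbdef
  have hfbc : ∀ j, ContinuousOn (fb j) (Icc a b) := by
    intro j
    have := intervalIntegral.continuousOn_primitive_interval' (hf' j)
      (left_mem_uIcc (a := a) (b := b))
    rwa [uIcc_of_le hab'] at this
  -- rewrite LHS via the canonical primitives
  have hL : (∫ x in a..b, ∑ i, D i (fun j => |f j x|) * |f' i x|)
      = ∫ x in a..b, ∑ i, D i (fun j => |fb j x|) * |f' i x| := by
    apply intervalIntegral.integral_congr
    intro x hx
    rw [uIcc_of_le hab'] at hx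
    have hfx : (fun j => |f j x|) = fun j => |fb j x| := by
      funext j; rw [hf j x hx]
    show (∑ i, D i (fun j => |f j x|) * |f' i x|) = _
    rw [hfx]
  rw [hL]
  apply le_of_forall_pos_le_add
  intro δ hδ
  -- constants
  set M : ℝ := (∑ j, p j) + 2 with hMdef
  have hsum_nn : 0 ≤ ∑ j, p j := Finset.sum_nonneg fun j _ => hpnn j
  have hM0 : (0:ℝ) ≤ M := by simp only [hMdef]; linarith
  have hpM : ∀ j, p j + 2 ≤ M := by
    intro j
    have : p j ≤ ∑ k, p k := Finset.single_le_sum (fun k _ => hpnn k) (Finset.mem_univ j)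
    simp only [hMdef]; linarith
  set C : ℝ := ∑ i, D i (fun _ => M) with hCdef
  have hCnn : 0 ≤ C := Finset.sum_nonneg fun i _ => hDnonneg i _ fun _ => hM0
  -- continuity of F at p
  have hFc : ContinuousAt F p := (hFderiv p hpnn).continuousAt
  have hq0 : (fun j => p j + 2 * (0:ℝ)) = p := by funext j; simp
  have hqc : ContinuousAt (fun t : ℝ => (fun j => p j + 2 * t : Fin m → ℝ)) 0 := by fun_prop
  have hFq : ContinuousAt (fun t : ℝ => F (fun j => p j + 2 * t)) 0 := by
    have hFc' : ContinuousAt F ((fun t : ℝ => (fun j => p j + 2 * t : Fin m → ℝ)) 0) := by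
      simpa only [hq0] using hFc
    exact hFc'.comp hqc
  have h2' : F (fun j => p j + 2 * (0:ℝ)) < F p + δ / 2 := by rw [hq0]; linarith
  have hev : ∀ᶠ t in nhds (0:ℝ), F (fun j => p j + 2 * t) < F p + δ / 2 :=
    hFq (Iio_mem_nhds h2')
  obtain ⟨ε₀, hε₀pos, hball⟩ := Metric.eventually_nhds_iff.mp hev
  set ε : ℝ := min (ε₀ / 2) (min 1 (δ / (2 * (C + 1)))) with hεdef
  have hεpos : 0 < ε := lt_min (by linarith) (lt_min one_pos (by positivity))
  have hε1 : ε ≤ 1 := (min_le_right _ _).trans (min_le_left _ _)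
  have hεδ : ε ≤ δ / (2 * (C + 1)) := (min_le_right _ _).trans (min_le_right _ _)
  have hεF : F (fun j => p j + 2 * ε) < F p + δ / 2 := by
    apply hball
    rw [Real.dist_eq, sub_zero, abs_of_pos hεpos]
    have := min_le_left (ε₀ / 2) (min 1 (δ / (2 * (C + 1))))
    linarith
  -- continuous approximation of |f' i|
  have happrox : ∀ i : Fin m, ∃ h : ℝ → ℝ, Continuous h ∧ (∀ x, 0 ≤ h x) ∧
      (∫ x in a..b, abs (|f' i x| - h x)) ≤ ε := by
    intro i
    set P : ℝ → ℝ := (Set.Ioc a b).indicator (fun x => |f' i x|) with hPdef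
    have hPint : Integrable P volume :=
      (habs i).1.integrable_indicator measurableSet_Ioc
    obtain ⟨g₀, -, hg₀int, hg₀cont, hg₀i⟩ :=
      hPint.exists_hasCompactSupport_integral_sub_le hεpos
    refine ⟨fun x => max (g₀ x) 0, hg₀cont.max continuous_const,
      fun x => le_max_right _ _, ?_⟩
    have hkey : ∀ x ∈ Ioc a b, abs (|f' i x| - max (g₀ x) 0) ≤ ‖P x - g₀ x‖ := by
      intro x hx
      rw [hPdef, Set.indicator_of_mem hx, Real.norm_eq_abs]
      rcases le_or_gt 0 (g₀ x) with hcase | hcase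
      · rw [max_eq_left hcase]
      · rw [max_eq_right hcase.le, sub_zero, abs_of_nonneg (abs_nonneg (f' i x))]
        calc |f' i x| ≤ |f' i x| - g₀ x := by linarith
          _ ≤ abs (|f' i x| - g₀ x) := le_abs_self _
    have hIOn : IntegrableOn (fun x => abs (|f' i x| - max (g₀ x) 0)) (Ioc a b) volume := by
      apply Integrable.abs
      exact (habs i).1.sub ((hg₀cont.max continuous_const).integrableOn_Ioc)
    calc (∫ x in a..b, abs (|f' i x| - max (g₀ x) 0))
        = ∫ x in Ioc a b, abs (|f' i x| - max (g₀ x) 0) := by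
          rw [intervalIntegral.integral_of_le hab']
      _ ≤ ∫ x in Ioc a b, ‖P x - g₀ x‖ := by
          apply setIntegral_mono_on hIOn ((hPint.sub hg₀i).norm.integrableOn)
            measurableSet_Ioc hkey
      _ ≤ ∫ x, ‖P x - g₀ x‖ :=
          setIntegral_le_integral (hPint.sub hg₀i).norm
            (Filter.Eventually.of_forall fun x => norm_nonneg _)
      _ ≤ ε := hg₀int
  choose h hhc hhnn hhε using happrox
  have hhint : ∀ j, IntervalIntegrable (h j) volume a b :=
    fun j => (hhc j).intervalIntegrable a b
  -- the smooth dominating primitives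
  set g : Fin m → ℝ → ℝ := fun j x => ε + ∫ t in a..x, h j t with hgdef
  have hgd : ∀ j x, HasDerivAt (g j) (h j x) x := fun j x =>
    (((hhc j).integral_hasStrictDerivAt a x).hasDerivAt).const_add ε
  have hgc : ∀ j, Continuous (g j) := fun j =>
    continuous_iff_continuousAt.mpr fun x => (hgd j x).continuousAt
  have hgnn : ∀ x ∈ Icc a b, ∀ j, 0 ≤ g j x := by
    intro x hx j
    have h1 : 0 ≤ ∫ t in a..x, h j t :=
      intervalIntegral.integral_nonneg hx.1 fun t _ => hhnn j t
    simp only [hgdef]; linarith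
  have hdiffint : ∀ j, IntervalIntegrable (fun t => abs (|f' j t| - h j t)) volume a b :=
    fun j => ((habs j).sub (hhint j)).abs
  have hsubss : ∀ x ∈ Icc a b, uIcc a x ⊆ uIcc a b := by
    intro x hx
    apply uIcc_subset_uIcc left_mem_uIcc
    rw [uIcc_of_le hab']; exact hx
  have hεx : ∀ j, ∀ x ∈ Icc a b, (∫ t in a..x, |f' j t|) ≤ (∫ t in a..x, h j t) + ε := by
    intro j x hx
    have h1 : (∫ t in a..x, (|f' j t| - h j t)) ≤ ∫ t in a..x, abs (|f' j t| - h j t) := by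
      apply intervalIntegral.integral_mono_on hx.1
        (((habs j).sub (hhint j)).mono_set (hsubss x hx))
        ((hdiffint j).mono_set (hsubss x hx))
      intro t _; exact le_abs_self _
    have h2 : (∫ t in a..x, abs (|f' j t| - h j t)) ≤ ∫ t in a..b, abs (|f' j t| - h j t) := by
      apply intervalIntegral.integral_mono_interval le_rfl hx.1 hx.2
        (Filter.Eventually.of_forall fun t => abs_nonneg _) (hdiffint j)
    have h4 : (∫ t in a..x, (|f' j t| - h j t))
        = (∫ t in a..x, |f' j t|) - ∫ t in a..x, h j t :=
      intervalIntegral.integral_sub ((habs j).mono_set (hsubss x hx))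
        ((hhint j).mono_set (hsubss x hx))
    have h3 := hhε j
    linarith
  have hfble : ∀ j, ∀ x ∈ Icc a b, |fb j x| ≤ g j x := by
    intro j x hx
    have h1 : |fb j x| ≤ ∫ t in a..x, |f' j t| := by
      simp only [hfbdef]
      exact intervalIntegral.abs_integral_le_integral_abs hx.1
    have h2 := hεx j x hx
    simp only [hgdef]; linarith
  have hhb : ∀ j, (∫ t in a..b, h j t) ≤ p j + ε := by
    intro j
    have h1 : (∫ t in a..b, (h j t - |f' j t|)) ≤ ∫ t in a..b, abs (|f' j t| - h j t) := by
      apply intervalIntegral.integral_mono_on hab' ((hhint j).sub (habs j)) (hdiffint j)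
      intro t _; rw [abs_sub_comm]; exact le_abs_self _
    have h4 : (∫ t in a..b, (h j t - |f' j t|))
        = (∫ t in a..b, h j t) - ∫ t in a..b, |f' j t| :=
      intervalIntegral.integral_sub (hhint j) (habs j)
    have h3 := hhε j
    simp only [hp]
    linarith
  have hgM : ∀ j, ∀ x ∈ Icc a b, g j x ≤ M := by
    intro j x hx
    have h1 : (∫ t in a..x, h j t) ≤ ∫ t in a..b, h j t := by
      apply intervalIntegral.integral_mono_interval le_rfl hx.1 hx.2
        (Filter.Eventually.of_forall fun t => hhnn j t) (hhint j)
    have h2 := hhb j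
    have h3 := hpM j
    simp only [hgdef]; linarith
  -- continuity of the composed functions
  have hDgc : ∀ i, ContinuousOn (fun x => D i (fun j => g j x)) (Icc a b) := fun i =>
    (hDcont i).comp (continuous_pi fun j => hgc j).continuousOn fun x hx => hgnn x hx
  have hDfbc : ∀ i, ContinuousOn (fun x => D i (fun j => |fb j x|)) (Icc a b) := fun i =>
    (hDcont i).comp (continuousOn_pi.2 fun j => (hfbc j).abs) fun x _ j => abs_nonneg _
  -- integrability of everything in sight
  have hint1 : IntervalIntegrable
      (fun x => ∑ i, D i (fun j => |fb j x|) * |f' i x|) volume a b := by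
    have := IntervalIntegrable.sum Finset.univ
      (f := fun i x => D i (fun j => |fb j x|) * |f' i x|)
      (fun i _ => (habs i).continuousOn_mul (by rw [uIcc_of_le hab']; exact hDfbc i))
    refine IntervalIntegrable.congr_ae this ?_
    exact Filter.EventuallyEq.of_eq (funext fun x => by simp)
  have hint2 : IntervalIntegrable
      (fun x => ∑ i, D i (fun j => g j x) * |f' i x|) volume a b := by
    have := IntervalIntegrable.sum Finset.univ
      (f := fun i x => D i (fun j => g j x) * |f' i x|)
      (fun i _ => (habs i).continuousOn_mul (by rw [uIcc_of_le hab']; exact hDgc i))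
    refine IntervalIntegrable.congr_ae this ?_
    exact Filter.EventuallyEq.of_eq (funext fun x => by simp)
  have hintA : IntervalIntegrable
      (fun x => ∑ i, D i (fun j => g j x) * h i x) volume a b := by
    apply ContinuousOn.intervalIntegrable
    rw [uIcc_of_le hab']
    exact continuousOn_finset_sum _ fun i _ => (hDgc i).mul (hhc i).continuousOn
  have hintB : IntervalIntegrable
      (fun x => ∑ i, D i (fun _ => M) * abs (|f' i x| - h i x)) volume a b := by
    have := IntervalIntegrable.sum Finset.univ
      (f := fun i x => D i (fun _ => M) * abs (|f' i x| - h i x))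
      (fun i _ => (hdiffint i).const_mul _)
    refine IntervalIntegrable.congr_ae this ?_
    exact Filter.EventuallyEq.of_eq (funext fun x => by simp)
  -- Step A
  have stepA : (∫ x in a..b, ∑ i, D i (fun j => |fb j x|) * |f' i x|)
      ≤ ∫ x in a..b, ∑ i, D i (fun j => g j x) * |f' i x| := by
    apply intervalIntegral.integral_mono_on hab' hint1 hint2
    intro x hx
    apply Finset.sum_le_sum
    intro i _
    exact mul_le_mul_of_nonneg_right
      (hDmono i _ _ (fun j => abs_nonneg _) fun j => hfble j x hx) (abs_nonneg _)
  -- Step B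
  have stepB : (∫ x in a..b, ∑ i, D i (fun j => g j x) * |f' i x|)
      ≤ ∫ x in a..b, ((∑ i, D i (fun j => g j x) * h i x)
          + ∑ i, D i (fun _ => M) * abs (|f' i x| - h i x)) := by
    apply intervalIntegral.integral_mono_on hab' hint2 (hintA.add hintB)
    intro x hx
    rw [← Finset.sum_add_distrib]
    apply Finset.sum_le_sum
    intro i _
    have hgx : ∀ j, 0 ≤ g j x := hgnn x hx
    have hDg0 : 0 ≤ D i (fun j => g j x) := hDnonneg i _ hgx
    have e1 : D i (fun j => g j x) * (|f' i x| - h i x)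
        ≤ D i (fun _ => M) * abs (|f' i x| - h i x) := by
      calc D i (fun j => g j x) * (|f' i x| - h i x)
          ≤ D i (fun j => g j x) * abs (|f' i x| - h i x) :=
            mul_le_mul_of_nonneg_left (le_abs_self _) hDg0
        _ ≤ D i (fun _ => M) * abs (|f' i x| - h i x) :=
            mul_le_mul_of_nonneg_right
              (hDmono i _ _ hgx fun j => hgM j x hx) (abs_nonneg _)
    nlinarith [e1]
  -- split the integral
  have split : (∫ x in a..b, ((∑ i, D i (fun j => g j x) * h i x)
          + ∑ i, D i (fun _ => M) * abs (|f' i x| - h i x)))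
      = (∫ x in a..b, ∑ i, D i (fun j => g j x) * h i x)
        + ∫ x in a..b, ∑ i, D i (fun _ => M) * abs (|f' i x| - h i x) :=
    intervalIntegral.integral_add hintA hintB
  -- error term bound
  have errB : (∫ x in a..b, ∑ i, D i (fun _ => M) * abs (|f' i x| - h i x)) ≤ C * ε := by
    rw [intervalIntegral.integral_finset_sum (fun i _ => (hdiffint i).const_mul _)]
    have : ∀ i ∈ Finset.univ, (∫ x in a..b, D i (fun _ => M) * abs (|f' i x| - h i x))
        ≤ D i (fun _ => M) * ε := by
      intro i _
      rw [intervalIntegral.integral_const_mul]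
      exact mul_le_mul_of_nonneg_left (hhε i) (hDnonneg i _ fun _ => hM0)
    calc (∑ i, ∫ x in a..b, D i (fun _ => M) * abs (|f' i x| - h i x))
        ≤ ∑ i, D i (fun _ => M) * ε := Finset.sum_le_sum this
      _ = C * ε := by rw [hCdef, Finset.sum_mul]
  -- FTC for the main term
  have hGd : ∀ x ∈ uIcc a b, HasDerivAt (fun x => F (fun j => g j x))
      (∑ i, D i (fun j => g j x) * h i x) x := by
    intro x hx
    rw [uIcc_of_le hab'] at hx
    have h1 : HasDerivAt (fun x => (fun j => g j x : Fin m → ℝ)) (fun j => h j x) x :=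
      hasDerivAt_pi.2 fun j => hgd j x
    have h2 := (hFderiv _ (hgnn x hx)).comp_hasDerivAt x h1
    exact h2.congr_deriv (by simp [ContinuousLinearMap.sum_apply, smul_eq_mul])
  have ftc : (∫ x in a..b, ∑ i, D i (fun j => g j x) * h i x)
      = F (fun j => g j b) - F (fun j => g j a) :=
    intervalIntegral.integral_eq_sub_of_hasDerivAt hGd hintA
  -- bound the FTC term
  have hga : (fun j => g j a) = fun _ => ε := by
    funext j; simp [hgdef]
  have hga0 : 0 ≤ F (fun j => g j a) := by
    rw [hga, ← hF0]
    exact opial_F_mono F D hFderiv hDcont hDnonneg (fun j => le_rfl) fun j => hεpos.le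
  have hgb : F (fun j => g j b) ≤ F (fun j => p j + 2 * ε) := by
    apply opial_F_mono F D hFderiv hDcont hDnonneg
      (fun j => hgnn b (right_mem_Icc.2 hab') j)
    intro j
    have h2 := hhb j
    simp only [hgdef]; linarith
  -- errors
  have hCe : C * ε ≤ δ / 2 := by
    have h1 : C * ε ≤ (C + 1) * ε := by nlinarith [hεpos.le]
    have h2 : (C + 1) * ε ≤ (C + 1) * (δ / (2 * (C + 1))) :=
      mul_le_mul_of_nonneg_left hεδ (by linarith)
    have h3 : (C + 1) * (δ / (2 * (C + 1))) = δ / 2 := by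
      field_simp
    linarith
  calc (∫ x in a..b, ∑ i, D i (fun j => |fb j x|) * |f' i x|)
      ≤ (∫ x in a..b, ∑ i, D i (fun j => g j x) * h i x)
        + ∫ x in a..b, ∑ i, D i (fun _ => M) * abs (|f' i x| - h i x) := by
        rw [← split]; exact stepA.trans stepB
    _ ≤ (F (fun j => g j b) - F (fun j => g j a)) + C * ε := by
        rw [ftc]; linarith [errB]
    _ ≤ F (fun j => p j + 2 * ε) + C * ε := by linarith [hga0, hgb]
    _ ≤ F p + δ := by linarith [hεF, hCe]
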